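/- Let V : ℝ → [0,∞) be even and non-increasing on (0,∞), and let x₀ < x₁ < ... < xₙ be real numbers. Then the sum T₇ := (2/n²) ∑_{i=3}^{n} ∑_{j=1}^{i-2} ( V(x_{i-1} - x_j) - V(x_i - x_{j-1}) ) satisfies T₇ ≤ (4/n²) ∑_{i=2}^{n-1} V(x_i - x_{i-1}). -/

import Mathlib

open Finset

theorem stmt8 (V : ℝ → ℝ) (hV0 : ∀ x, 0 ≤ V x) (heven : ∀ x, V (-x) = V x)
    (hanti : AntitoneOn V (Set.Ioi (0:ℝ)))
    (n : ℕ) (hn : 1 ≤ n) (x : ℕ → ℝ)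
    (hmono : ∀ i j, i < j → j ≤ n → x i < x j) :
    (2/(n:ℝ)^2) * ∑ i ∈ Finset.Icc 3 n, ∑ j ∈ Finset.Icc 1 (i-2),
        (V (x (i-1) - x j) - V (x i - x (j-1)))
      ≤ (4/(n:ℝ)^2) * ∑ i ∈ Finset.Icc 2 (n-1), V (x i - x (i-1)) := by
  have hV : ∀ s t : ℝ, 0 < s → s ≤ t → V t ≤ V s := fun s t hs hst =>
    hanti (Set.mem_Ioi.2 hs) (Set.mem_Ioi.2 (lt_of_lt_of_le hs hst)) hst
  have hTnn : (0:ℝ) ≤ ∑ i ∈ Icc 2 (n-1), V (x i - x (i-1)) :=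
    Finset.sum_nonneg fun i _ => hV0 _
  have key : ∑ i ∈ Icc 3 n, ∑ j ∈ Icc 1 (i-2), (V (x (i-1) - x j) - V (x i - x (j-1)))
      ≤ 2 * ∑ i ∈ Icc 2 (n-1), V (x i - x (i-1)) := by
    rcases lt_or_ge n 3 with h3 | h3
    · rw [show Icc 3 n = ∅ from Icc_eq_empty (by omega), Finset.sum_empty]
      linarith
    -- n ≥ 3
    rw [Finset.sum_congr rfl (fun i _ => Finset.sum_sub_distrib _ _), Finset.sum_sub_distrib]
    -- reindex the first sum: i ↦ i-1
    have hA : ∑ i ∈ Icc 3 n, ∑ j ∈ Icc 1 (i-2), V (x (i-1) - x j)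
        = ∑ i ∈ Icc 2 (n-1), ∑ j ∈ Icc 1 (i-1), V (x i - x j) := by
      refine Finset.sum_nbij' (fun i => i - 1) (fun i => i + 1) ?_ ?_ ?_ ?_ ?_
      · intro a ha; simp only [mem_Icc] at *; omega
      · intro a ha; simp only [mem_Icc] at *; omega
      · intro a ha; simp only [mem_Icc] at ha; show a - 1 + 1 = a; omega
      · intro a ha; simp only [mem_Icc] at ha; show a + 1 - 1 = a; omega
      · intro a ha
        have h1 : a - 2 = a - 1 - 1 := by omega
        rw [h1]
    -- reindex each inner sum of the second sum: j ↦ j-1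
    have hB : ∀ i ∈ Icc 3 n, ∑ j ∈ Icc 1 (i-2), V (x i - x (j-1))
        = ∑ j ∈ Icc 0 (i-3), V (x i - x j) := by
      intro i hi
      simp only [mem_Icc] at hi
      refine Finset.sum_nbij' (fun j => j - 1) (fun j => j + 1) ?_ ?_ ?_ ?_ ?_
      · intro a ha; simp only [mem_Icc] at *; omega
      · intro a ha; simp only [mem_Icc] at *; omega
      · intro a ha; simp only [mem_Icc] at ha; show a - 1 + 1 = a; omega
      · intro a ha; simp only [mem_Icc] at ha; show a + 1 - 1 = a; omega
      · intro a ha; rfl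
    rw [hA, Finset.sum_congr rfl hB]
    -- drop the i = n term of the second sum (it is nonnegative)
    have hdrop : ∑ i ∈ Icc 3 (n-1), ∑ j ∈ Icc 0 (i-3), V (x i - x j)
        ≤ ∑ i ∈ Icc 3 n, ∑ j ∈ Icc 0 (i-3), V (x i - x j) := by
      refine Finset.sum_le_sum_of_subset_of_nonneg
        (Finset.Icc_subset_Icc_right (by omega)) ?_
      intro i _ _; exact Finset.sum_nonneg fun j _ => hV0 _
    have hins : Icc 2 (n-1) = insert 2 (Icc 3 (n-1)) := by
      ext k; simp only [mem_Icc, mem_insert]; omega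
    have h2not : (2:ℕ) ∉ Icc 3 (n-1) := by simp
    -- pointwise bound on Icc 3 (n-1)
    have hpt : ∀ i ∈ Icc 3 (n-1),
        ∑ j ∈ Icc 1 (i-1), V (x i - x j) - ∑ j ∈ Icc 0 (i-3), V (x i - x j)
          ≤ 2 * V (x i - x (i-1)) := by
      intro i hi
      simp only [mem_Icc] at hi
      obtain ⟨hi3, hin⟩ := hi
      have hin' : i ≤ n := by omega
      have hsplit : Icc 1 (i-1) = Icc 1 (i-3) ∪ Icc (i-2) (i-1) := by
        ext k; simp only [mem_Icc, mem_union]; omega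
      have hdisj : Disjoint (Icc 1 (i-3)) (Icc (i-2) (i-1)) := by
        rw [Finset.disjoint_left]
        intro k hk hk'
        simp only [mem_Icc] at hk hk'
        omega
      have htwo : Icc (i-2) (i-1) = insert (i-2) ({i-1} : Finset ℕ) := by
        ext k; simp only [mem_Icc, mem_insert, mem_singleton]; omega
      have hne : i - 2 ≠ i - 1 := by omega
      have hzero : Icc 0 (i-3) = insert 0 (Icc 1 (i-3)) := by
        ext k; simp only [mem_Icc, mem_insert]; omega
      rw [hsplit, Finset.sum_union hdisj, htwo, Finset.sum_insert (by simpa using hne),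
        Finset.sum_singleton, hzero, Finset.sum_insert (by simp)]
      have h1 : V (x i - x (i-2)) ≤ V (x i - x (i-1)) := by
        refine hV _ _ ?_ ?_
        · have := hmono (i-1) i (by omega) hin'
          linarith
        · have := hmono (i-2) (i-1) (by omega) (by omega)
          linarith
      have h2 : 0 ≤ V (x i - x 0) := hV0 _
      linarith
    calc ∑ i ∈ Icc 2 (n-1), ∑ j ∈ Icc 1 (i-1), V (x i - x j)
          - ∑ i ∈ Icc 3 n, ∑ j ∈ Icc 0 (i-3), V (x i - x j)
        ≤ ∑ i ∈ Icc 2 (n-1), ∑ j ∈ Icc 1 (i-1), V (x i - x j)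
          - ∑ i ∈ Icc 3 (n-1), ∑ j ∈ Icc 0 (i-3), V (x i - x j) := by linarith
      _ = V (x 2 - x 1) + ∑ i ∈ Icc 3 (n-1),
            (∑ j ∈ Icc 1 (i-1), V (x i - x j) - ∑ j ∈ Icc 0 (i-3), V (x i - x j)) := by
          rw [hins, Finset.sum_insert h2not, Finset.sum_sub_distrib]
          norm_num
          ring
      _ ≤ V (x 2 - x 1) + ∑ i ∈ Icc 3 (n-1), 2 * V (x i - x (i-1)) := by
          have := Finset.sum_le_sum hpt
          linarith
      _ ≤ 2 * ∑ i ∈ Icc 2 (n-1), V (x i - x (i-1)) := by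
          rw [hins, Finset.sum_insert h2not, ← Finset.mul_sum]
          have h0 : (0:ℝ) ≤ V (x 2 - x 1) := hV0 _
          norm_num
          linarith
  have hc : (0:ℝ) ≤ 2/(n:ℝ)^2 := by positivity
  calc (2/(n:ℝ)^2) * ∑ i ∈ Icc 3 n, ∑ j ∈ Icc 1 (i-2),
          (V (x (i-1) - x j) - V (x i - x (j-1)))
      ≤ (2/(n:ℝ)^2) * (2 * ∑ i ∈ Icc 2 (n-1), V (x i - x (i-1))) :=
        mul_le_mul_of_nonneg_left key hc
    _ = (4/(n:ℝ)^2) * ∑ i ∈ Icc 2 (n-1), V (x i - x (i-1)) := by ring
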